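/- The map Ψ(x,y) = (-(bx+1)/x, -(by+1)/y) conjugates F_2(x,y) = (y, x/(1 + b(y - x))) to F_5(x,y) = (y, (by + xy)/(y + b)); that is, Ψ(F_2(x,y)) = F_5(Ψ(x,y)) wherever defined, and Ψ^{-1}(x,y) = (-1/(x+b), -1/(y+b)). -/

import Mathlib

/-- `Ψ(x,y) = (-(bx+1)/x, -(by+1)/y)` conjugates `F₂(x,y) = (y, x/(1+b(y-x)))` to
`F₅(x,y) = (y, (by+xy)/(y+b))`, with inverse `Ψ⁻¹(x,y) = (-1/(x+b), -1/(y+b))`. -/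
theorem palladino_conjugation_F2_F5 (b : ℂ) (hb : b ≠ 0) :
    let F2 : ℂ × ℂ → ℂ × ℂ := fun p => (p.2, p.1 / (1 + b * (p.2 - p.1)))
    let F5 : ℂ × ℂ → ℂ × ℂ := fun p => (p.2, (b * p.2 + p.1 * p.2) / (p.2 + b))
    let Ψ : ℂ × ℂ → ℂ × ℂ := fun p => (-(b * p.1 + 1) / p.1, -(b * p.2 + 1) / p.2)
    let Ψinv : ℂ × ℂ → ℂ × ℂ := fun p => (-1 / (p.1 + b), -1 / (p.2 + b))
    (∀ x y : ℂ, x ≠ 0 → y ≠ 0 → 1 + b * (y - x) ≠ 0 →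
      Ψ (F2 (x, y)) = F5 (Ψ (x, y))) ∧
    (∀ x y : ℂ, x ≠ 0 → y ≠ 0 → Ψinv (Ψ (x, y)) = (x, y)) ∧
    (∀ x y : ℂ, x + b ≠ 0 → y + b ≠ 0 → Ψ (Ψinv (x, y)) = (x, y)) := by
  intro F2 F5 Ψ Ψinv
  refine ⟨fun x y hx hy hd => ?_, fun x y hx hy => ?_, fun x y hx hy => ?_⟩
  · have h1 : -(b * y + 1) / y + b = -1 / y := by field_simp; ring
    simp only [F2, F5, Ψ, Prod.mk.injEq]
    constructor
    · trivial
    · rw [h1]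
      have h2 : (-1 : ℂ) / y ≠ 0 := by
        simp [hy]
      field_simp
      ring
  · simp only [Ψ, Ψinv, Prod.mk.injEq]
    constructor <;> [skip; skip] <;>
    · rw [div_add' _ _ _ (by assumption)]
      field_simp
      ring
  · have hx' : (-1 : ℂ) / (x + b) ≠ 0 := by simp [hx]
    have hy' : (-1 : ℂ) / (y + b) ≠ 0 := by simp [hy]
    simp only [Ψ, Ψinv, Prod.mk.injEq]
    constructor
    · rw [div_eq_iff hx']; field_simp; ring
    · rw [div_eq_iff hy']; field_simp; ring
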